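/- Let m ∈ ℕ, let (s,p) ∈ 𝕀_m, and let z be uniformly distributed in 𝕄_m^d. Then ℙ( z ∈ 𝔹_m(s,p) ) ≥ 2^{−(m+4)}. -/

import Mathlib

open MeasureTheory Finset
open scoped Classical

noncomputable section

/-- The `k`-dispersion of a finite point set `P ⊆ [0,1]^d`: the supremum of the volumes of
axis-parallel boxes inside `[0,1]^d` containing at most `k` points of `P`. -/
def kdisp (d k : ℕ) (P : Finset (Fin d → ℝ)) : ℝ :=
  sSup { v : ℝ | ∃ a b : Fin d → ℝ,
    (∀ i, 0 ≤ a i ∧ a i ≤ b i ∧ b i ≤ 1) ∧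
    (P.filter (fun x => ∀ i, x i ∈ Set.Ioo (a i) (b i))).card ≤ k ∧
    v = ∏ i, (b i - a i) }

/-- The minimal `k`-dispersion over all `n`-point subsets of `[0,1]^d`. -/
def kdispStar (d k n : ℕ) : ℝ :=
  sInf { v : ℝ | ∃ P : Finset (Fin d → ℝ),
    (∀ x ∈ P, ∀ i, x i ∈ Set.Icc (0:ℝ) 1) ∧ P.card = n ∧ v = kdisp d k P }

/-- The one-dimensional mesh `𝕄_m = {1/2^m, 2/2^m, …, (2^m-1)/2^m}`. -/
def Mgrid (m : ℕ) : Finset ℝ := (Finset.Icc 1 (2 ^ m - 1)).image fun j : ℕ => (j : ℝ) / 2 ^ m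

/-- The mesh `𝕄_m^d`. -/
def Ggrid (m d : ℕ) : Finset (Fin d → ℝ) := Fintype.piFinset fun _ => Mgrid m

/-- `I` is a subinterval of `[0,1]`. -/
def IsIntervalIn01 (I : Set ℝ) : Prop := I ⊆ Set.Icc 0 1 ∧ I.OrdConnected

/-- Membership of the axis-parallel box `∏_ℓ I ℓ` in the family `Ω_m(s,p)`: the box has
volume exceeding `2^{-m}`, and for every coordinate `ℓ` one has
`s ℓ / 2^m < vol(I ℓ) ≤ (s ℓ + 1)/2^m` and `inf (I ℓ) ∈ [p ℓ - 2^{-m}, p ℓ)`. -/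
def memOmega (m : ℕ) {d : ℕ} (s : Fin d → ℕ) (p : Fin d → ℝ) (I : Fin d → Set ℝ) : Prop :=
  (∀ ℓ, IsIntervalIn01 (I ℓ)) ∧
  ((2:ℝ) ^ m)⁻¹ < (volume (Set.pi Set.univ I)).toReal ∧
  ∀ ℓ, (s ℓ : ℝ) / 2 ^ m < (volume (I ℓ)).toReal ∧
    (volume (I ℓ)).toReal ≤ ((s ℓ : ℝ) + 1) / 2 ^ m ∧
    sInf (I ℓ) ∈ Set.Ico (p ℓ - ((2:ℝ) ^ m)⁻¹) (p ℓ)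

/-- `(s,p)` is an admissible index pair, i.e. `(s,p) ∈ 𝕀_m`: the parameters lie in the
allowed ranges and `Ω_m(s,p) ≠ ∅`. -/
def memIm (m : ℕ) {d : ℕ} (s : Fin d → ℕ) (p : Fin d → ℝ) : Prop :=
  (∀ ℓ, s ℓ < 2 ^ m) ∧
  (∀ ℓ, ∃ j : ℕ, 1 ≤ j ∧ j ≤ 2 ^ m - 1 ∧ p ℓ = (j : ℝ) / 2 ^ m) ∧
  ∃ I, memOmega m s p I

/-- Membership of `z` in the box `𝔹_m(s,p) = ∏_ℓ [p ℓ, p ℓ + (s ℓ - 1)/2^m]`. -/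
def memBox (m : ℕ) {d : ℕ} (s : Fin d → ℕ) (p : Fin d → ℝ) (z : Fin d → ℝ) : Prop :=
  ∀ ℓ, z ℓ ∈ Set.Icc (p ℓ) (p ℓ + ((s ℓ : ℝ) - 1) / 2 ^ m)

lemma log_sq_le (x : ℝ) (hx : 1 ≤ x) : Real.log x ^ 2 ≤ x := by
  set u := Real.log x with hu
  have hu0 : 0 ≤ u := Real.log_nonneg hx
  have hxe : x = Real.exp u := (Real.exp_log (lt_of_lt_of_le one_pos hx)).symm
  rw [hxe]
  have h4 : Real.exp u = (Real.exp (u/4))^4 := by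
    rw [← Real.exp_nat_mul]; ring_nf
  have h1 : 1 + u/4 ≤ Real.exp (u/4) := by
    have := Real.add_one_le_exp (u/4); linarith
  have h2 : u ≤ (1 + u/4)^2 := by nlinarith [sq_nonneg (1 - u/4)]
  have h3 : u^2 ≤ ((1+u/4)^2)^2 := by
    have := pow_le_pow_left₀ hu0 h2 2
    simpa using this
  have h5 : ((1+u/4)^2)^2 ≤ (Real.exp (u/4))^4 := by
    have h14 : (1+u/4)^4 ≤ (Real.exp (u/4))^4 :=
      pow_le_pow_left₀ (by linarith) h1 4
    calc ((1+u/4)^2)^2 = (1+u/4)^4 := by ring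
      _ ≤ _ := h14
  calc u^2 ≤ ((1+u/4)^2)^2 := h3
    _ ≤ (Real.exp (u/4))^4 := h5
    _ = Real.exp u := h4.symm

lemma one_sub_ge (x : ℝ) (h0 : 0 ≤ x) (h1 : x ≤ 1/2) :
    Real.exp (-(Real.log 4) * x) ≤ 1 - x := by
  have hc := convexOn_exp.2 (Set.mem_univ (0:ℝ)) (Set.mem_univ (-(Real.log 4)/2))
    (by linarith : (0:ℝ) ≤ 1 - 2*x) (by linarith : (0:ℝ) ≤ 2*x) (by ring)
  have he : Real.exp (-(Real.log 4)/2) = 1/2 := by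
    have h42 : -(Real.log 4)/2 = -Real.log 2 := by
      rw [show (4:ℝ) = 2^2 by norm_num, Real.log_pow]; push_cast; ring
    rw [h42, Real.exp_neg, Real.exp_log two_pos]; norm_num
  simp only [smul_eq_mul, Real.exp_zero, he] at hc
  have heq : (1 - 2*x) * 0 + 2*x * (-(Real.log 4)/2) = -(Real.log 4) * x := by ring
  rw [heq] at hc
  linarith

lemma coord_claim (N a : ℝ) (hN : 2 ≤ N) (ha2 : 2 ≤ a) (haN : a ≤ N) :
    (N - a)/(a*(N-1)) ≤ 2 * Real.log (N/a) / Real.log N := by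
  have hNpos : (0:ℝ) < N := by linarith
  have hapos : (0:ℝ) < a := by linarith
  have hlogN : 0 < Real.log N := Real.log_pos (by linarith)
  have hNa1 : (1:ℝ) ≤ N/a := (one_le_div hapos).2 haN
  have hlogNa : 0 ≤ Real.log (N/a) := Real.log_nonneg hNa1
  have hden : 0 < a*(N-1) := by nlinarith
  by_cases hcase : a^2 ≤ N
  · -- small a: RHS ≥ 1 ≥ LHS
    have hx1 : (N - a)/(a*(N-1)) ≤ 1 := by
      rw [div_le_one hden]; nlinarith
    have h2log : Real.log N ≤ 2 * Real.log (N/a) := by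
      have : Real.log N ≤ Real.log ((N/a)^2) := by
        apply Real.log_le_log hNpos
        rw [div_pow]
        rw [le_div_iff₀ (by positivity)]
        nlinarith
      rwa [Real.log_pow] at this
      
    calc (N - a)/(a*(N-1)) ≤ 1 := hx1
      _ ≤ 2 * Real.log (N/a) / Real.log N := by
          rw [le_div_iff₀ hlogN]; linarith
  · -- large a: a^2 > N
    push_neg at hcase
    have hlogd : (N - a)/N ≤ Real.log (N/a) := by
      have := Real.log_le_sub_one_of_pos (show (0:ℝ) < a/N by positivity)
      have hln : Real.log (a/N) = - Real.log (N/a) := by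
        rw [← Real.log_inv]; congr 1; field_simp
      rw [hln] at this
      have : -Real.log (N/a) ≤ a/N - 1 := this
      have h2 : 1 - a/N ≤ Real.log (N/a) := by linarith
      calc (N-a)/N = 1 - a/N := by field_simp
        _ ≤ _ := h2
    -- key: N * log N ≤ 2 * a * (N-1)
    have hlogle : Real.log N ≤ a := by
      have h1 : Real.log N ^2 ≤ N := log_sq_le N (by linarith)
      nlinarith
    have hkey : N * Real.log N ≤ 2 * a * (N-1) := by nlinarith
    calc (N - a)/(a*(N-1)) ≤ 2 * ((N-a)/N) / Real.log N := by
          rw [div_le_div_iff₀ hden hlogN]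
          have hNa : 0 ≤ N - a := by linarith
          -- (N-a) * log N ≤ 2 * ((N-a)/N) * (a*(N-1))
          have : (N-a) * (N * Real.log N) ≤ (N-a) * (2*a*(N-1)) :=
            mul_le_mul_of_nonneg_left hkey hNa
          have hexp : 2 * ((N-a)/N) * (a*(N-1)) = (N-a) * (2*a*(N-1)) / N := by ring
          rw [hexp, le_div_iff₀ hNpos]
          nlinarith
      _ ≤ 2 * Real.log (N/a) / Real.log N := by
          gcongr

lemma key (d : ℕ) (N : ℝ) (hN : 2 ≤ N) (a : Fin d → ℝ)
    (ha2 : ∀ ℓ, 2 ≤ a ℓ) (haN : ∀ ℓ, a ℓ ≤ N)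
    (hprod : 1/N < ∏ ℓ, a ℓ / N) :
    (1/N) * (1/16) ≤ ∏ ℓ, (a ℓ - 1)/(N-1) := by
  have hNpos : (0:ℝ) < N := by linarith
  have hN1 : (0:ℝ) < N - 1 := by linarith
  have hlogN : 0 < Real.log N := Real.log_pos (by linarith)
  set x : Fin d → ℝ := fun ℓ => (N - a ℓ)/(a ℓ * (N-1)) with hx
  have hx0 : ∀ ℓ, 0 ≤ x ℓ := fun ℓ => by
    have := ha2 ℓ; have := haN ℓ
    apply div_nonneg (by linarith) (by nlinarith)
  have hxhalf : ∀ ℓ, x ℓ ≤ 1/2 := fun ℓ => by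
    have h2 := ha2 ℓ; have hup := haN ℓ
    rw [hx, div_le_iff₀ (by nlinarith)]
    nlinarith
  -- sum bound
  have hsum : ∑ ℓ, x ℓ ≤ 2 := by
    have h1 : ∀ ℓ, x ℓ ≤ 2 * Real.log (N / a ℓ) / Real.log N := fun ℓ =>
      coord_claim N (a ℓ) hN (ha2 ℓ) (haN ℓ)
    have h2 : ∑ ℓ, x ℓ ≤ ∑ ℓ, 2 * Real.log (N / a ℓ) / Real.log N :=
      Finset.sum_le_sum fun ℓ _ => h1 ℓ
    have h3 : ∑ ℓ, 2 * Real.log (N / a ℓ) / Real.log N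
        = (2 / Real.log N) * ∑ ℓ, Real.log (N / a ℓ) := by
      rw [Finset.mul_sum]; apply Finset.sum_congr rfl; intro ℓ _; ring
    have h4 : ∑ ℓ, Real.log (N / a ℓ) = Real.log (∏ ℓ, N / a ℓ) := by
      rw [Real.log_prod]
      intro ℓ _
      have := ha2 ℓ; positivity
    have h5 : (∏ ℓ, N / a ℓ) ≤ N := by
      have hinv : (∏ ℓ, N / a ℓ) = (∏ ℓ, a ℓ / N)⁻¹ := by
        rw [← Finset.prod_inv_distrib]
        apply Finset.prod_congr rfl; intro ℓ _
        have h0 : a ℓ ≠ 0 := by have := ha2 ℓ; linarith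
        field_simp
      rw [hinv]
      have hp : 0 < ∏ ℓ, a ℓ / N := lt_trans (by positivity) hprod
      rw [inv_le_comm₀ hp hNpos] at *
      · exact le_of_lt (by rw [one_div] at hprod; exact lt_of_le_of_lt (le_refl _) hprod)
    have h6 : Real.log (∏ ℓ, N / a ℓ) ≤ Real.log N := by
      apply Real.log_le_log ?_ h5
      apply Finset.prod_pos; intro ℓ _; have := ha2 ℓ; positivity
    calc ∑ ℓ, x ℓ ≤ (2 / Real.log N) * ∑ ℓ, Real.log (N / a ℓ) := by rw [← h3]; exact h2
      _ = (2 / Real.log N) * Real.log (∏ ℓ, N / a ℓ) := by rw [h4]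
      _ ≤ (2 / Real.log N) * Real.log N := by
          apply mul_le_mul_of_nonneg_left h6 (by positivity)
      _ = 2 := by field_simp
  -- product of (1-x) ≥ 1/16
  have hprod1x : (1:ℝ)/16 ≤ ∏ ℓ, (1 - x ℓ) := by
    have hstep : ∏ ℓ, Real.exp (-(Real.log 4) * x ℓ) ≤ ∏ ℓ, (1 - x ℓ) :=
      Finset.prod_le_prod (fun ℓ _ => (Real.exp_pos _).le)
        (fun ℓ _ => one_sub_ge (x ℓ) (hx0 ℓ) (hxhalf ℓ))
    have hexp : ∏ ℓ, Real.exp (-(Real.log 4) * x ℓ)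
        = Real.exp (-(Real.log 4) * ∑ ℓ, x ℓ) := by
      rw [← Real.exp_sum, Finset.mul_sum]
    have hmono : Real.exp (-(Real.log 4) * 2) ≤ Real.exp (-(Real.log 4) * ∑ ℓ, x ℓ) := by
      apply Real.exp_le_exp.2
      have hlog4 : 0 ≤ Real.log 4 := Real.log_nonneg (by norm_num)
      nlinarith
    have hval : Real.exp (-(Real.log 4) * 2) = 1/16 := by
      rw [show -(Real.log 4) * 2 = Real.log ((16:ℝ)⁻¹) by
        rw [Real.log_inv, show (16:ℝ) = 4^2 by norm_num, Real.log_pow]; push_cast; ring]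
      rw [Real.exp_log (by norm_num)]
      norm_num
    calc (1:ℝ)/16 = Real.exp (-(Real.log 4) * 2) := by rw [hval]
      _ ≤ ∏ ℓ, Real.exp (-(Real.log 4) * x ℓ) := by rw [hexp]; exact hmono
      _ ≤ ∏ ℓ, (1 - x ℓ) := hstep
  -- identity and assembly
  have hid : ∀ ℓ, (a ℓ - 1)/(N-1) = (a ℓ / N) * (1 - x ℓ) := fun ℓ => by
    have h2 := ha2 ℓ
    have ha0 : a ℓ ≠ 0 := by linarith
    rw [hx]
    field_simp
    ring
  calc (1/N) * (1/16) ≤ (∏ ℓ, a ℓ / N) * ∏ ℓ, (1 - x ℓ) := by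
        apply mul_le_mul hprod.le hprod1x (by norm_num) ?_
        exact le_of_lt (lt_trans (by positivity) hprod)
    _ = ∏ ℓ, (a ℓ / N) * (1 - x ℓ) := (Finset.prod_mul_distrib).symm
    _ = ∏ ℓ, (a ℓ - 1)/(N-1) := Finset.prod_congr rfl fun ℓ _ => (hid ℓ).symm
-- injectivity of j ↦ j/2^m
lemma f_inj (m : ℕ) : Function.Injective (fun j : ℕ => (j : ℝ) / 2 ^ m) := by
  intro a b h
  simp only at h
  have h2 : (0:ℝ) < 2^m := by positivity
  field_simp at h
  exact_mod_cast h

lemma Mgrid_card (m : ℕ) : (Mgrid m).card = 2^m - 1 := by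
  rw [Mgrid, Finset.card_image_of_injective _ (f_inj m), Nat.card_Icc]; omega

lemma Ggrid_card (m d : ℕ) : (Ggrid m d).card = (2^m - 1)^d := by
  rw [Ggrid, Fintype.card_piFinset]
  simp [Mgrid_card]

-- per-coordinate count
lemma count_coord (m : ℕ) (jp sv : ℕ) (hj1 : 1 ≤ jp) (hs1 : 1 ≤ sv)
    (hjs : jp + sv ≤ 2^m) :
    ((Mgrid m).filter (fun y => y ∈ Set.Icc ((jp:ℝ)/2^m) ((jp:ℝ)/2^m + ((sv:ℝ)-1)/2^m))).card
      = sv := by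
  classical
  have h2 : (0:ℝ) < 2^m := by positivity
  rw [Mgrid]
  rw [Finset.filter_image]
  rw [Finset.card_image_of_injective _ (f_inj m)]
  have hset : (Finset.Icc 1 (2^m - 1)).filter
      (fun j : ℕ => ((j:ℝ)/2^m) ∈ Set.Icc ((jp:ℝ)/2^m) ((jp:ℝ)/2^m + ((sv:ℝ)-1)/2^m))
      = Finset.Icc jp (jp + sv - 1) := by
    ext k
    simp only [Finset.mem_filter, Finset.mem_Icc, Set.mem_Icc]
    constructor
    · rintro ⟨⟨hk1, hk2⟩, hlo, hhi⟩
      have hlo' : (jp:ℝ) ≤ k := by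
        rwa [div_le_div_iff_of_pos_right h2] at hlo
      have h1 : jp ≤ k := by exact_mod_cast hlo'
      have hhi' : (k:ℝ) ≤ (jp:ℝ) + (sv:ℝ) - 1 := by
        have : (jp:ℝ)/2^m + ((sv:ℝ)-1)/2^m = ((jp:ℝ) + (sv:ℝ) - 1)/2^m := by ring
        rw [this] at hhi
        rwa [div_le_div_iff_of_pos_right h2] at hhi
      have h2' : (k:ℝ) + 1 ≤ (jp:ℝ) + (sv:ℝ) := by linarith
      have h3 : k + 1 ≤ jp + sv := by exact_mod_cast h2'
      exact ⟨h1, by omega⟩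
    · rintro ⟨hk1, hk2⟩
      have hk2' : k + 1 ≤ jp + sv := by omega
      refine ⟨⟨by omega, by omega⟩, ?_, ?_⟩
      · rw [div_le_div_iff_of_pos_right h2]; exact_mod_cast hk1
      · have : (jp:ℝ)/2^m + ((sv:ℝ)-1)/2^m = ((jp:ℝ) + (sv:ℝ) - 1)/2^m := by ring
        rw [this, div_le_div_iff_of_pos_right h2]
        have : (k:ℝ) + 1 ≤ (jp:ℝ) + (sv:ℝ) := by exact_mod_cast hk2'
        linarith
  rw [hset, Nat.card_Icc]
  omega

/-- For `(s,p) ∈ 𝕀_m` and `z` uniformly distributed in `𝕄_m^d`, the probability that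
`z ∈ 𝔹_m(s,p)` is at least `2^{-(m+4)}`. -/
theorem statement_5 (m d : ℕ) (hm : 1 ≤ m) (hd : 1 ≤ d)
    (s : Fin d → ℕ) (p : Fin d → ℝ) (hsp : memIm m s p) :
    (((Ggrid m d).filter fun z => memBox m s p z).card : ℝ) / ((Ggrid m d).card : ℝ)
      ≥ ((2:ℝ) ^ (m + 4))⁻¹ := by
  obtain ⟨hs, hp, I, hIint, hIvol, hIco⟩ := hsp
  have h2m : (0:ℝ) < 2^m := by positivity
  -- choose j
  choose j hj1 hj2 hpj using hp
  set v : Fin d → ℝ := fun ℓ => (volume (I ℓ)).toReal with hv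
  have hsub : ∀ ℓ, I ℓ ⊆ Set.Icc 0 1 := fun ℓ => (hIint ℓ).1
  have hfin : ∀ ℓ, volume (I ℓ) ≤ 1 := fun ℓ => by
    calc volume (I ℓ) ≤ volume (Set.Icc (0:ℝ) 1) := measure_mono (hsub ℓ)
      _ = 1 := by rw [Real.volume_Icc]; norm_num
  have hv1 : ∀ ℓ, v ℓ ≤ 1 := fun ℓ => by
    have h := ENNReal.toReal_mono (by norm_num : (1:ENNReal) ≠ ⊤) (hfin ℓ)
    simpa [hv] using h
  have hv0 : ∀ ℓ, 0 ≤ v ℓ := fun ℓ => ENNReal.toReal_nonneg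
  have hvlo : ∀ ℓ, (s ℓ : ℝ)/2^m < v ℓ := fun ℓ => (hIco ℓ).1
  have hvhi : ∀ ℓ, v ℓ ≤ ((s ℓ : ℝ)+1)/2^m := fun ℓ => (hIco ℓ).2.1
  -- product of volumes
  have hprodv : ((2:ℝ)^m)⁻¹ < ∏ ℓ, v ℓ := by
    have hpi : volume (Set.pi Set.univ I) = ∏ ℓ, volume (I ℓ) := volume_pi_pi I
    have : (volume (Set.pi Set.univ I)).toReal = ∏ ℓ, v ℓ := by
      rw [hpi, ENNReal.toReal_prod]
    rwa [this] at hIvol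
  -- s ℓ ≥ 1
  have hs1 : ∀ ℓ, 1 ≤ s ℓ := by
    intro ℓ
    by_contra hcon
    push_neg at hcon
    have hsz : s ℓ = 0 := by omega
    have hvle : v ℓ ≤ (2^m:ℝ)⁻¹ := by
      have h := hvhi ℓ
      rw [hsz] at h
      norm_num at h
      exact h
    have hrest : ∏ ℓ' ∈ Finset.univ.erase ℓ, v ℓ' ≤ 1 :=
      Finset.prod_le_one (fun _ _ => hv0 _) (fun _ _ => hv1 _)
    have hsplit : ∏ ℓ', v ℓ' = v ℓ * ∏ ℓ' ∈ Finset.univ.erase ℓ, v ℓ' :=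
      (Finset.mul_prod_erase Finset.univ v (Finset.mem_univ ℓ)).symm
    have : ∏ ℓ', v ℓ' ≤ (2^m:ℝ)⁻¹ := by
      rw [hsplit]
      calc v ℓ * ∏ ℓ' ∈ Finset.univ.erase ℓ, v ℓ' ≤ (2^m:ℝ)⁻¹ * 1 := by
            apply mul_le_mul hvle hrest (Finset.prod_nonneg fun _ _ => hv0 _) (by positivity)
        _ = (2^m:ℝ)⁻¹ := by ring
    linarith [hprodv]
  -- j ℓ + s ℓ ≤ 2^m
  have hjs : ∀ ℓ, j ℓ + s ℓ ≤ 2^m := by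
    intro ℓ
    have hinf := (hIco ℓ).2.2
    obtain ⟨hinflo, hinfhi⟩ := hinf
    -- v ℓ ≤ 1 - sInf (I ℓ)
    have hne : (I ℓ).Nonempty := by
      rw [Set.nonempty_iff_ne_empty]
      intro hcon
      have hz : v ℓ = 0 := by
        show (volume (I ℓ)).toReal = 0
        rw [hcon]; simp
      have h0 : (0:ℝ) ≤ (s ℓ:ℝ)/2^m := by positivity
      linarith [hvlo ℓ]
    have hbdd : BddBelow (I ℓ) := BddBelow.mono (hsub ℓ) bddBelow_Icc
    have hsub2 : I ℓ ⊆ Set.Icc (sInf (I ℓ)) 1 := fun y hy =>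
      ⟨csInf_le hbdd hy, (hsub ℓ hy).2⟩
    have hinfle1 : sInf (I ℓ) ≤ 1 := by
      obtain ⟨y, hy⟩ := hne
      exact le_trans (csInf_le hbdd hy) (hsub ℓ hy).2
    have hvbound : v ℓ ≤ 1 - sInf (I ℓ) := by
      rw [hv]
      calc (volume (I ℓ)).toReal ≤ (volume (Set.Icc (sInf (I ℓ)) 1)).toReal := by
            apply ENNReal.toReal_mono
            · rw [Real.volume_Icc]; exact ENNReal.ofReal_ne_top
            · exact measure_mono hsub2
        _ = 1 - sInf (I ℓ) := by
            rw [Real.volume_Icc, ENNReal.toReal_ofReal (by linarith)]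
    -- now (s ℓ:ℝ)/2^m < 1 - (p ℓ - 2^{-m}) = 1 - j/2^m + 1/2^m
    have hkey : (s ℓ : ℝ)/2^m < 1 - (j ℓ:ℝ)/2^m + (2^m:ℝ)⁻¹ := by
      have h1 := hvlo ℓ
      have h2 : p ℓ - (2^m:ℝ)⁻¹ ≤ sInf (I ℓ) := hinflo
      rw [hpj ℓ] at h2
      linarith
    have : (j ℓ:ℝ) + (s ℓ:ℝ) < 2^m + 1 := by
      rw [div_lt_iff₀ h2m] at hkey
      have hexp : (1 - (j ℓ:ℝ)/2^m + ((2:ℝ)^m)⁻¹)*2^m = 2^m - (j ℓ:ℝ) + 1 := by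
        field_simp
      rw [hexp] at hkey
      linarith
    have : ((j ℓ + s ℓ : ℕ) : ℝ) < ((2^m + 1 : ℕ) : ℝ) := by push_cast; linarith
    have := Nat.cast_lt.mp this
    omega
  -- card of the filtered set
  have hcardfilter : ((Ggrid m d).filter fun z => memBox m s p z).card = ∏ ℓ, s ℓ := by
    have hEq : ((Ggrid m d).filter fun z => memBox m s p z)
        = Fintype.piFinset (fun ℓ => (Mgrid m).filter
            (fun y => y ∈ Set.Icc ((j ℓ:ℝ)/2^m) ((j ℓ:ℝ)/2^m + ((s ℓ:ℝ)-1)/2^m))) := by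
      ext z
      rw [Finset.mem_filter, Fintype.mem_piFinset]
      simp only [Finset.mem_filter, Fintype.mem_piFinset, Ggrid, memBox]
      constructor
      · rintro ⟨hz, hbox⟩
        intro ℓ
        refine ⟨hz ℓ, ?_⟩
        have := hbox ℓ
        rwa [hpj ℓ] at this
      · intro h
        refine ⟨fun ℓ => (h ℓ).1, fun ℓ => ?_⟩
        have := (h ℓ).2
        rwa [← hpj ℓ] at this
    rw [hEq, Fintype.card_piFinset]
    apply Finset.prod_congr rfl
    intro ℓ _
    exact count_coord m (j ℓ) (s ℓ) (hj1 ℓ) (hs1 ℓ) (hjs ℓ)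
  -- assemble
  rw [hcardfilter, Ggrid_card]
  have hN2 : (2:ℝ) ≤ 2^m := by
    calc (2:ℝ) = 2^1 := by norm_num
      _ ≤ 2^m := by apply pow_le_pow_right₀ (by norm_num) hm
  set N : ℝ := 2^m with hNdef
  have hcast1 : ((2^m - 1 : ℕ) : ℝ) = N - 1 := by
    have : (1:ℕ) ≤ 2^m := Nat.one_le_two_pow
    push_cast [this]
    simp [hNdef]
  have hkey2 := key d N hN2 (fun ℓ => (s ℓ : ℝ) + 1)
    (fun ℓ => by
      show (2:ℝ) ≤ (s ℓ:ℝ) + 1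
      have h1 := hs1 ℓ
      have h2 : (1:ℝ) ≤ (s ℓ:ℝ) := by exact_mod_cast h1
      linarith)
    (fun ℓ => by
      show (s ℓ:ℝ) + 1 ≤ N
      have h1 : s ℓ + 1 ≤ 2^m := hs ℓ
      have h2 : ((s ℓ:ℝ)) + 1 ≤ ((2:ℝ))^m := by exact_mod_cast h1
      simpa [hNdef] using h2)
    (by -- 1/N < ∏ (s+1)/N
      have h1 : ∏ ℓ, v ℓ ≤ ∏ ℓ, ((s ℓ:ℝ)+1)/N := by
        apply Finset.prod_le_prod (fun ℓ _ => hv0 ℓ)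
        intro ℓ _
        exact hvhi ℓ
      rw [one_div]
      calc N⁻¹ < ∏ ℓ, v ℓ := hprodv
        _ ≤ _ := h1)
  have hfinal : (1/N) * (1/16) ≤ ∏ ℓ, (s ℓ:ℝ)/(N-1) := by
    have : ∀ ℓ, ((s ℓ:ℝ) + 1 - 1)/(N-1) = (s ℓ:ℝ)/(N-1) := fun ℓ => by ring_nf
    calc (1/N) * (1/16) ≤ ∏ ℓ, ((s ℓ:ℝ)+1-1)/(N-1) := hkey2
      _ = ∏ ℓ, (s ℓ:ℝ)/(N-1) := Finset.prod_congr rfl fun ℓ _ => this ℓ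
  -- convert goal
  have hgoal : ((∏ ℓ, s ℓ : ℕ) : ℝ) / (((2^m-1)^d : ℕ) : ℝ) = ∏ ℓ, (s ℓ:ℝ)/(N-1) := by
    push_cast
    rw [hcast1]
    rw [Finset.prod_div_distrib]
    congr 1
    rw [Finset.prod_const, Finset.card_univ, Fintype.card_fin]
  rw [ge_iff_le, hgoal]
  calc ((2:ℝ)^(m+4))⁻¹ = (1/N) * (1/16) := by
        rw [pow_add, hNdef]
        norm_num
        ring
    _ ≤ _ := hfinal
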